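/- arXiv:1312.5248 — 4 statements merged into one kernel-verified Lean document; each statement's English description precedes it below -/
import Mathlib

section
/- For every integer n ≥ 66 that is divisible by 66, there exists a K4-free simple graph G on n vertices with exactly n²/4 + 1 edges such that f(G) ≤ 2n²/33 − 7n/33. -/
open SimpleGraph

/-- `{u, v}` is a `K₄`-saturating edge of `G`: `u ≠ v`, `u` and `v` are nonadjacent, and
adding the edge `uv` to `G` creates a copy of `K₄`. -/
def SatEdge {V : Type*} (G : SimpleGraph V) (u v : V) : Prop :=
  u ≠ v ∧ ¬ G.Adj u v ∧ ¬ (G ⊔ SimpleGraph.fromEdgeSet {s(u, v)}).CliqueFree 4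

/-- `f G`: the number of `K₄`-saturating edges of `G`. -/
noncomputable def satCount {V : Type*} (G : SimpleGraph V) : ℕ :=
  {e : Sym2 V | ∃ u v, e = s(u, v) ∧ SatEdge G u v}.ncard

open Finset

def HB : Fin 7 → Fin 7 → Bool := fun i j =>
  decide ((i.val, j.val) ∈ [(0,1),(0,2),(1,2),(1,3),(1,4),(2,5),(2,6),(3,6),(4,5),(4,6),
    (1,0),(2,0),(2,1),(3,1),(4,1),(5,2),(6,2),(6,3),(5,4),(6,4)])

def Hg : SimpleGraph (Fin 7) where
  Adj i j := HB i j
  symm := ⟨fun i j h => by revert i j h; decide⟩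
  loopless := ⟨fun i h => by revert i h; decide⟩

instance : DecidableRel Hg.Adj := fun i j => inferInstanceAs (Decidable (HB i j = true))

lemma HK4 : ∀ a b c d : Fin 7, Hg.Adj a b → Hg.Adj a c → Hg.Adj a d → Hg.Adj b c →
    Hg.Adj b d → Hg.Adj c d → False := by decide

lemma Hpat : ∀ a b x y : Fin 7, Hg.Adj x y → Hg.Adj a x → Hg.Adj a y → Hg.Adj b x →
    Hg.Adj b y → ¬ Hg.Adj a b → a = b ∧ (a = 0 ∨ a = 1 ∨ a = 2) := by decide

/-- block index of vertex `x` (for parameter `k`, `n = 66*(k+1)`). -/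
def blkf (k : ℕ) (x : ℕ) : Fin 7 :=
  if x < 4*k+5 then 0 else if x < 20*k+21 then 1 else if x < 36*k+37 then 2
  else if x < 37*k+37 then 3 else if x < 51*k+52 then 4 else if x < 51*k+53 then 5 else 6

def szf (k : ℕ) (i : Fin 7) : ℕ :=
  match i with
  | ⟨0, _⟩ => 4*k+5
  | ⟨1, _⟩ => 16*k+16
  | ⟨2, _⟩ => 16*k+16
  | ⟨3, _⟩ => k
  | ⟨4, _⟩ => 14*k+15
  | ⟨5, _⟩ => 1
  | ⟨6, _⟩ => 15*k+13

def Gg (k : ℕ) : SimpleGraph (Fin (66*(k+1))) := Hg.comap (fun x => blkf k x.val)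

instance (k : ℕ) : DecidableRel (Gg k).Adj :=
  fun a b => inferInstanceAs (Decidable (Hg.Adj _ _))

def Bf (k : ℕ) (i : Fin 7) : Finset (Fin (66*(k+1))) :=
  univ.filter (fun x => blkf k x.val = i)

lemma card_filter_ico {n : ℕ} (a b : ℕ) (hb : b ≤ n) (P : Fin n → Prop) [DecidablePred P]
    (h : ∀ x : Fin n, P x ↔ (a ≤ x.val ∧ x.val < b)) :
    #(univ.filter P) = b - a := by
  rw [← Nat.card_Ico a b]
  apply card_bij (fun (x : Fin n) _ => x.val)
  · intro x hx
    rw [mem_filter] at hx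
    rw [Finset.mem_Ico]
    exact (h x).mp hx.2
  · intro x _ y _ hxy
    exact Fin.ext hxy
  · intro y hy
    rw [Finset.mem_Ico] at hy
    exact ⟨⟨y, lt_of_lt_of_le hy.2 hb⟩, mem_filter.mpr ⟨mem_univ _, (h _).mpr ⟨hy.1, hy.2⟩⟩, rfl⟩

set_option maxHeartbeats 1000000 in
lemma blkf_iff (k : ℕ) (x : ℕ) :
    (blkf k x = 0 ↔ x < 4*k+5) ∧
    (blkf k x = 1 ↔ 4*k+5 ≤ x ∧ x < 20*k+21) ∧
    (blkf k x = 2 ↔ 20*k+21 ≤ x ∧ x < 36*k+37) ∧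
    (blkf k x = 3 ↔ 36*k+37 ≤ x ∧ x < 37*k+37) ∧
    (blkf k x = 4 ↔ 37*k+37 ≤ x ∧ x < 51*k+52) ∧
    (blkf k x = 5 ↔ 51*k+52 ≤ x ∧ x < 51*k+53) ∧
    (blkf k x = 6 ↔ 51*k+53 ≤ x) := by
  unfold blkf
  split_ifs with h1 h2 h3 h4 h5 h6 <;>
    refine ⟨⟨fun h => ?_, fun h => ?_⟩, ⟨fun h => ?_, fun h => ?_⟩, ⟨fun h => ?_, fun h => ?_⟩,
      ⟨fun h => ?_, fun h => ?_⟩, ⟨fun h => ?_, fun h => ?_⟩, ⟨fun h => ?_, fun h => ?_⟩,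
      ⟨fun h => ?_, fun h => ?_⟩⟩ <;>
    first | rfl | omega | (exact absurd h (by decide))

lemma card_Bf (k : ℕ) (i : Fin 7) : #(Bf k i) = szf k i := by
  fin_cases i
  · rw [Bf, card_filter_ico 0 (4*k+5) (by omega)
      _ (fun x => by rw [show ((⟨0,by omega⟩ : Fin 7) : Fin 7) = 0 from rfl, (blkf_iff k x.val).1]; omega)]
    show 4*k+5-0 = 4*k+5; omega
  · rw [Bf, card_filter_ico (4*k+5) (20*k+21) (by omega)
      _ (fun x => by rw [show ((⟨1,by omega⟩ : Fin 7) : Fin 7) = 1 from rfl, (blkf_iff k x.val).2.1])]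
    show 20*k+21-(4*k+5) = 16*k+16; omega
  · rw [Bf, card_filter_ico (20*k+21) (36*k+37) (by omega)
      _ (fun x => by rw [show ((⟨2,by omega⟩ : Fin 7) : Fin 7) = 2 from rfl, (blkf_iff k x.val).2.2.1])]
    show 36*k+37-(20*k+21) = 16*k+16; omega
  · rw [Bf, card_filter_ico (36*k+37) (37*k+37) (by omega)
      _ (fun x => by rw [show ((⟨3,by omega⟩ : Fin 7) : Fin 7) = 3 from rfl, (blkf_iff k x.val).2.2.2.1])]
    show 37*k+37-(36*k+37) = k; omega
  · rw [Bf, card_filter_ico (37*k+37) (51*k+52) (by omega)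
      _ (fun x => by rw [show ((⟨4,by omega⟩ : Fin 7) : Fin 7) = 4 from rfl, (blkf_iff k x.val).2.2.2.2.1])]
    show 51*k+52-(37*k+37) = 14*k+15; omega
  · rw [Bf, card_filter_ico (51*k+52) (51*k+53) (by omega)
      _ (fun x => by rw [show ((⟨5,by omega⟩ : Fin 7) : Fin 7) = 5 from rfl, (blkf_iff k x.val).2.2.2.2.2.1])]
    show 51*k+53-(51*k+52) = 1; omega
  · rw [Bf, card_filter_ico (51*k+53) (66*(k+1)) (by omega)
      _ (fun x => by rw [show ((⟨6,by omega⟩ : Fin 7) : Fin 7) = 6 from rfl, (blkf_iff k x.val).2.2.2.2.2.2]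
                     exact ⟨fun h => ⟨h, x.isLt⟩, fun h => h.1⟩)]
    show 66*(k+1)-(51*k+53) = 15*k+13; omega

lemma Gg_adj (k : ℕ) (u v : Fin (66*(k+1))) :
    (Gg k).Adj u v ↔ Hg.Adj (blkf k u.val) (blkf k v.val) := Iff.rfl

set_option maxHeartbeats 2000000 in
lemma pair_count (k : ℕ) :
    #(univ.filter fun (p : Fin (66*(k+1)) × Fin (66*(k+1))) => (Gg k).Adj p.1 p.2)
      = 2*(1089*(k+1)^2+1) := by
  rw [card_eq_sum_card_fiberwise
    (f := fun p : Fin (66*(k+1)) × Fin (66*(k+1)) => (blkf k p.1.val, blkf k p.2.val))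
    (t := univ) (fun _ _ => mem_univ _)]
  have key : ∀ i j : Fin 7,
      #((univ.filter fun p : Fin (66*(k+1)) × Fin (66*(k+1)) => (Gg k).Adj p.1 p.2).filter
        (fun p => (blkf k p.1.val, blkf k p.2.val) = (i, j)))
      = if Hg.Adj i j then szf k i * szf k j else 0 := by
    intro i j
    by_cases h : Hg.Adj i j
    · rw [if_pos h, ← card_Bf k i, ← card_Bf k j, ← card_product]
      congr 1
      ext p
      simp only [mem_filter, mem_univ, true_and, mem_product, Bf, Prod.mk.injEq, filter_filter]
      constructor
      · rintro ⟨-, h1, h2⟩; exact ⟨h1, h2⟩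
      · rintro ⟨h1, h2⟩
        refine ⟨?_, h1, h2⟩
        rw [Gg_adj, h1, h2]
        exact h
    · rw [if_neg h, card_eq_zero, filter_eq_empty_iff]
      intro p hp hpair
      rw [Prod.mk.injEq] at hpair
      rw [mem_filter] at hp
      exact h (hpair.1 ▸ hpair.2 ▸ (Gg_adj k p.1 p.2).mp hp.2)
  rw [Finset.sum_congr rfl (fun ij _ => key ij.1 ij.2)]
  rw [Fintype.sum_prod_type]
  simp only [Fin.sum_univ_seven]
  simp (config := { decide := true }) only [szf]
  norm_num
  ring

lemma Gg_cliqueFree (k : ℕ) : (Gg k).CliqueFree 4 := by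
  by_contra h
  rw [not_cliqueFree_iff] at h
  obtain ⟨f⟩ := h
  have hadj : ∀ i j : Fin 4, i ≠ j → (Gg k).Adj (f i) (f j) :=
    fun i j hij => f.toHom.map_adj (by simpa using hij)
  exact HK4 _ _ _ _ (hadj 0 1 (by decide)) (hadj 0 2 (by decide)) (hadj 0 3 (by decide))
    (hadj 1 2 (by decide)) (hadj 1 3 (by decide)) (hadj 2 3 (by decide))

lemma edge_count (k : ℕ) : #(Gg k).edgeFinset = 1089*(k+1)^2+1 := by
  have h2 := SimpleGraph.two_mul_card_edgeFinset (G := Gg k)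
  have h3 : (univ.filter fun (x, y) => (Gg k).Adj x y)
      = (univ.filter fun p : Fin (66*(k+1)) × Fin (66*(k+1)) => (Gg k).Adj p.1 p.2) := rfl
  rw [h3, pair_count] at h2
  exact Nat.eq_of_mul_eq_mul_left (by norm_num) h2

lemma sat_struct (k : ℕ) {u v : Fin (66*(k+1))} (h : SatEdge (Gg k) u v) :
    blkf k u.val = blkf k v.val ∧
      (blkf k u.val = 0 ∨ blkf k u.val = 1 ∨ blkf k u.val = 2) := by
  obtain ⟨hne, hnadj, hK⟩ := h
  rw [not_cliqueFree_iff] at hK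
  obtain ⟨f⟩ := hK
  have hinj : Function.Injective f := f.injective
  have hadj' : ∀ i j : Fin 4, i ≠ j →
      (Gg k).Adj (f i) (f j) ∨ (f i = u ∧ f j = v) ∨ (f i = v ∧ f j = u) := by
    intro i j hij
    have h := f.toHom.map_adj (show (⊤ : SimpleGraph (Fin 4)).Adj i j by simpa using hij)
    rw [SimpleGraph.sup_adj, SimpleGraph.fromEdgeSet_adj, Set.mem_singleton_iff] at h
    rcases h with h | ⟨h, -⟩
    · exact Or.inl h
    · rw [Sym2.eq_iff] at h
      exact Or.inr h
  have hex : ∃ i j : Fin 4, i ≠ j ∧ f i = u ∧ f j = v := by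
    by_contra hc
    push_neg at hc
    have hG : ∀ i j : Fin 4, i ≠ j → (Gg k).Adj (f i) (f j) := by
      intro i j hij
      rcases hadj' i j hij with h | ⟨h1, h2⟩ | ⟨h1, h2⟩
      · exact h
      · exact absurd h2 (hc i j hij h1)
      · exact absurd h1 (hc j i hij.symm h2)
    exact HK4 _ _ _ _ (hG 0 1 (by decide)) (hG 0 2 (by decide)) (hG 0 3 (by decide))
      (hG 1 2 (by decide)) (hG 1 3 (by decide)) (hG 2 3 (by decide))
  obtain ⟨i, j, hij, hfi, hfj⟩ := hex
  obtain ⟨a, b, hab, hai, haj, hbi, hbj⟩ :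
      ∃ a b : Fin 4, a ≠ b ∧ a ≠ i ∧ a ≠ j ∧ b ≠ i ∧ b ≠ j := by
    have : ∀ i j : Fin 4, i ≠ j → ∃ a b : Fin 4, a ≠ b ∧ a ≠ i ∧ a ≠ j ∧ b ≠ i ∧ b ≠ j := by
      decide
    exact this i j hij
  have hxy : (Gg k).Adj (f a) (f b) := by
    rcases hadj' a b hab with h | ⟨h1, -⟩ | ⟨h1, -⟩
    · exact h
    · exact absurd (hinj (h1.trans hfi.symm)) hai
    · exact absurd (hinj (h1.trans hfj.symm)) haj
  have hux : (Gg k).Adj u (f a) := by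
    rcases hadj' i a (Ne.symm hai) with h | ⟨-, h2⟩ | ⟨h1, -⟩
    · rwa [hfi] at h
    · exact absurd (hinj (h2.trans hfj.symm)) haj
    · exact absurd (hfi.symm.trans h1) hne
  have huy : (Gg k).Adj u (f b) := by
    rcases hadj' i b (Ne.symm hbi) with h | ⟨-, h2⟩ | ⟨h1, -⟩
    · rwa [hfi] at h
    · exact absurd (hinj (h2.trans hfj.symm)) hbj
    · exact absurd (hfi.symm.trans h1) hne
  have hvx : (Gg k).Adj v (f a) := by
    rcases hadj' j a (Ne.symm haj) with h | ⟨h1, -⟩ | ⟨-, h2⟩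
    · rwa [hfj] at h
    · exact absurd (hfj.symm.trans h1) hne.symm
    · exact absurd (hinj (h2.trans hfi.symm)) hai
  have hvy : (Gg k).Adj v (f b) := by
    rcases hadj' j b (Ne.symm hbj) with h | ⟨h1, -⟩ | ⟨-, h2⟩
    · rwa [hfj] at h
    · exact absurd (hfj.symm.trans h1) hne.symm
    · exact absurd (hinj (h2.trans hfi.symm)) hbi
  exact Hpat (blkf k u.val) (blkf k v.val) (blkf k (f a).val) (blkf k (f b).val)
    hxy hux huy hvx hvy hnadj

lemma half_card {N : ℕ} (s : Finset (Fin N)) :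
    2 * #(s.offDiag.filter fun p => p.1 < p.2) = #s * #s - #s := by
  rw [← Finset.offDiag_card]
  have hswap : #(s.offDiag.filter fun p => p.1 < p.2)
      = #(s.offDiag.filter fun p => ¬ p.1 < p.2) := by
    apply card_nbij' (fun p => (p.2, p.1)) (fun p => (p.2, p.1))
    · intro p hp
      simp only [mem_coe, mem_filter, mem_offDiag] at hp ⊢
      exact ⟨⟨hp.1.2.1, hp.1.1, hp.1.2.2.symm⟩, not_lt.mpr (le_of_lt hp.2)⟩
    · intro p hp
      simp only [mem_coe, mem_filter, mem_offDiag] at hp ⊢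
      exact ⟨⟨hp.1.2.1, hp.1.1, hp.1.2.2.symm⟩,
        lt_of_le_of_ne (not_lt.mp hp.2) (Ne.symm hp.1.2.2)⟩
    · intro p _; rfl
    · intro p _; rfl
  rw [two_mul]
  nth_rw 2 [hswap]
  exact card_filter_add_card_filter_not _

theorem stmt1 (n : ℕ) (hn : 66 ≤ n) (h66 : 66 ∣ n) :
    ∃ G : SimpleGraph (Fin n), G.CliqueFree 4 ∧
      G.edgeSet.ncard = n ^ 2 / 4 + 1 ∧
      (satCount G : ℝ) ≤ 2 * (n : ℝ) ^ 2 / 33 - 7 * n / 33 := by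
  obtain ⟨m, rfl⟩ := h66
  obtain ⟨k, rfl⟩ : ∃ k, m = k + 1 := ⟨m - 1, by omega⟩
  refine ⟨Gg k, Gg_cliqueFree k, ?_, ?_⟩
  · rw [← SimpleGraph.coe_edgeFinset, Set.ncard_coe_finset, edge_count]
    have h4 : (66*(k+1))^2 = 4*(1089*(k+1)^2) := by ring
    rw [h4, Nat.mul_div_cancel_left _ (by norm_num)]
  · set c0 := #((Bf k 0).offDiag.filter fun p => p.1 < p.2) with hc0
    set c1 := #((Bf k 1).offDiag.filter fun p => p.1 < p.2) with hc1
    set c2 := #((Bf k 2).offDiag.filter fun p => p.1 < p.2) with hc2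
    have key : satCount (Gg k) ≤ c0 + c1 + c2 := by
      classical
      set F : Finset (Fin (66*(k+1)) × Fin (66*(k+1))) :=
        ((Bf k 0).offDiag.filter fun p => p.1 < p.2)
          ∪ ((Bf k 1).offDiag.filter fun p => p.1 < p.2)
          ∪ ((Bf k 2).offDiag.filter fun p => p.1 < p.2) with hF
      have hmem : ∀ (x y : Fin (66*(k+1))), x < y → blkf k x.val = blkf k y.val →
          (blkf k x.val = 0 ∨ blkf k x.val = 1 ∨ blkf k x.val = 2) → (x, y) ∈ F := by
        intro x y hlt heq hcase
        rw [hF, mem_union, mem_union]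
        rcases hcase with h0 | h1 | h2
        · exact Or.inl (Or.inl (mem_filter.mpr ⟨mem_offDiag.mpr
            ⟨by simp [Bf, h0], by simp [Bf, ← heq, h0], ne_of_lt hlt⟩, hlt⟩))
        · exact Or.inl (Or.inr (mem_filter.mpr ⟨mem_offDiag.mpr
            ⟨by simp [Bf, h1], by simp [Bf, ← heq, h1], ne_of_lt hlt⟩, hlt⟩))
        · exact Or.inr (mem_filter.mpr ⟨mem_offDiag.mpr
            ⟨by simp [Bf, h2], by simp [Bf, ← heq, h2], ne_of_lt hlt⟩, hlt⟩)
      have hsub : {e : Sym2 (Fin (66*(k+1))) | ∃ u v, e = s(u,v) ∧ SatEdge (Gg k) u v}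
          ⊆ ↑(F.image fun p => s(p.1, p.2)) := by
        rintro e ⟨u, v, rfl, hs⟩
        have hstruct := sat_struct k hs
        have hne : u ≠ v := hs.1
        rcases lt_or_gt_of_ne hne with hlt | hgt
        · exact Finset.mem_coe.mpr (mem_image.mpr
            ⟨(u, v), hmem u v hlt hstruct.1 hstruct.2, rfl⟩)
        · rw [show s(u,v) = s(v,u) from Sym2.eq_swap]
          refine Finset.mem_coe.mpr (mem_image.mpr ⟨(v, u), hmem v u hgt hstruct.1.symm ?_, rfl⟩)
          rw [← hstruct.1]; exact hstruct.2
      calc satCount (Gg k) ≤ #(F.image fun p => s(p.1, p.2)) := by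
            unfold satCount
            rw [← Set.ncard_coe_finset]
            exact Set.ncard_le_ncard hsub (Set.toFinite _)
        _ ≤ #F := card_image_le
        _ ≤ c0 + c1 + c2 := by
            rw [hF]
            refine le_trans (card_union_le _ _) ?_
            exact Nat.add_le_add_right (card_union_le _ _) _
    have h0 := half_card (Bf k 0)
    have h1 := half_card (Bf k 1)
    have h2 := half_card (Bf k 2)
    rw [card_Bf k 0] at h0
    rw [card_Bf k 1] at h1
    rw [card_Bf k 2] at h2
    have s0 : szf k 0 = 4*k+5 := rfl
    have s1 : szf k 1 = 16*k+16 := rfl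
    have s2 : szf k 2 = 16*k+16 := rfl
    rw [s0] at h0; rw [s1] at h1; rw [s2] at h2
    have d0 : (4*k+5)*(4*k+5) - (4*k+5) = (4*k+5)*(4*k+4) :=
      Nat.sub_eq_of_eq_add (by ring)
    have d1 : (16*k+16)*(16*k+16) - (16*k+16) = (16*k+16)*(16*k+15) :=
      Nat.sub_eq_of_eq_add (by ring)
    rw [d0] at h0; rw [d1] at h1; rw [d1] at h2
    have htot : 2 * (c0 + c1 + c2) = 2 * ((k+1)*(264*k+250)) := by
      rw [mul_add, mul_add, h0, h1, h2]; ring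
    have h2s : 2 * satCount (Gg k) ≤ 2 * ((k+1)*(264*k+250)) := by
      rw [← htot]; exact Nat.mul_le_mul_left 2 key
    have hss : satCount (Gg k) ≤ (k+1)*(264*k+250) :=
      Nat.le_of_mul_le_mul_left h2s (by norm_num)
    refine le_trans (Nat.cast_le.mpr hss) (le_of_eq ?_)
    push_cast
    ring
end

section
/- Let G be a K4-free simple graph, let 𝒯 be a maximum triangle packing of G, and let T = {x, y, z} ∈ 𝒯. Let A, B, C be the sets of vertices of G' adjacent in G to both x and y, to both y and z, and to both x and z, respectively, and suppose A, B, C are all nonempty. Let s be the number of edges of G between {x, y, z} and V(G'). Then the number of K4-saturating edges of G with both endpoints in V(G'), plus the number of pairs of distinct nonadjacent vertices of G', is at least s²/6 − s/2. -/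
open SimpleGraph

/-- A triangle packing: a family of pairwise vertex-disjoint triangles of `G`. -/
def IsTrianglePacking {V : Type*} (G : SimpleGraph V) (𝒯 : Finset (Finset V)) : Prop :=
  (∀ T ∈ 𝒯, G.IsNClique 3 T) ∧ (𝒯 : Set (Finset V)).Pairwise Disjoint

/-- A maximum triangle packing: no triangle packing of `G` has more triangles. -/
def IsMaxTrianglePacking {V : Type*} (G : SimpleGraph V) (𝒯 : Finset (Finset V)) : Prop :=
  IsTrianglePacking G 𝒯 ∧ ∀ 𝒮 : Finset (Finset V), IsTrianglePacking G 𝒮 → 𝒮.card ≤ 𝒯.card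

private lemma clique4_false {V : Type*} {G : SimpleGraph V} (hK4 : G.CliqueFree 4)
    {a b c d : V} (hab : G.Adj a b) (hac : G.Adj a c) (had : G.Adj a d)
    (hbc : G.Adj b c) (hbd : G.Adj b d) (hcd : G.Adj c d) : False := by
  classical
  refine hK4 {a, b, c, d} ?_
  have h3 : G.IsNClique 3 {b, c, d} := SimpleGraph.is3Clique_triple_iff.2 ⟨hbc, hbd, hcd⟩
  have := h3.insert (a := a) (by
    intro e he
    simp only [Finset.mem_insert, Finset.mem_singleton] at he
    rcases he with rfl | rfl | rfl <;> assumption)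
  exact this

private lemma swap_false {V : Type*} [Fintype V] [DecidableEq V] {G : SimpleGraph V}
    (hK4 : G.CliqueFree 4) {𝒯 : Finset (Finset V)} (hpack : IsMaxTrianglePacking G 𝒯)
    {t t1 t2 : V} (hT : ({t, t1, t2} : Finset V) ∈ 𝒯)
    (ht1 : G.Adj t t1) (ht2 : G.Adj t t2) (h12 : G.Adj t1 t2)
    {u v w : V} (hu : u ∉ 𝒯.sup id) (hv : v ∉ 𝒯.sup id) (hw : w ∉ 𝒯.sup id)
    (htu : G.Adj t u) (htv : G.Adj t v) (huv : G.Adj u v)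
    (h1w : G.Adj t1 w) (h2w : G.Adj t2 w) : False := by
  have hWsub : ∀ S ∈ 𝒯, ∀ a ∈ S, a ∈ 𝒯.sup id := fun S hS a ha =>
    Finset.mem_sup.mpr ⟨S, hS, ha⟩
  have htW : t ∈ 𝒯.sup id := hWsub _ hT t (by simp)
  have ht1W : t1 ∈ 𝒯.sup id := hWsub _ hT t1 (by simp)
  have ht2W : t2 ∈ 𝒯.sup id := hWsub _ hT t2 (by simp)
  have hwu : w ≠ u := by rintro rfl; exact clique4_false hK4 ht1 ht2 htu h12 h1w h2w
  have hwv : w ≠ v := by rintro rfl; exact clique4_false hK4 ht1 ht2 htv h12 h1w h2w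
  have hS1 : G.IsNClique 3 ({t, u, v} : Finset V) :=
    SimpleGraph.is3Clique_triple_iff.2 ⟨htu, htv, huv⟩
  have hS2 : G.IsNClique 3 ({t1, t2, w} : Finset V) :=
    SimpleGraph.is3Clique_triple_iff.2 ⟨h12, h1w, h2w⟩
  -- disjointness facts
  have hd12 : Disjoint ({t, u, v} : Finset V) ({t1, t2, w} : Finset V) := by
    rw [Finset.disjoint_left]
    intro a ha ha'
    simp only [Finset.mem_insert, Finset.mem_singleton] at ha ha'
    rcases ha with rfl | rfl | rfl <;> rcases ha' with rfl | rfl | rfl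
    · exact ht1.ne rfl
    · exact ht2.ne rfl
    · exact hw htW
    · exact hu ht1W
    · exact hu ht2W
    · exact hwu rfl
    · exact hv ht1W
    · exact hv ht2W
    · exact hwv rfl
  have hd1 : ∀ S ∈ 𝒯.erase ({t, t1, t2} : Finset V), Disjoint ({t, u, v} : Finset V) S := by
    intro S hS
    have hSmem := Finset.mem_of_mem_erase hS
    have hST : Disjoint ({t, t1, t2} : Finset V) S :=
      hpack.1.2 hT hSmem (Finset.ne_of_mem_erase hS).symm
    rw [Finset.disjoint_left]
    intro a ha haS
    simp only [Finset.mem_insert, Finset.mem_singleton] at ha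
    rcases ha with rfl | rfl | rfl
    · exact Finset.disjoint_left.mp hST (by simp) haS
    · exact hu (hWsub _ hSmem _ haS)
    · exact hv (hWsub _ hSmem _ haS)
  have hd2 : ∀ S ∈ 𝒯.erase ({t, t1, t2} : Finset V), Disjoint ({t1, t2, w} : Finset V) S := by
    intro S hS
    have hSmem := Finset.mem_of_mem_erase hS
    have hST : Disjoint ({t, t1, t2} : Finset V) S :=
      hpack.1.2 hT hSmem (Finset.ne_of_mem_erase hS).symm
    rw [Finset.disjoint_left]
    intro a ha haS
    simp only [Finset.mem_insert, Finset.mem_singleton] at ha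
    rcases ha with rfl | rfl | rfl
    · exact Finset.disjoint_left.mp hST (by simp) haS
    · exact Finset.disjoint_left.mp hST (by simp) haS
    · exact hw (hWsub _ hSmem _ haS)
  set 𝒮 : Finset (Finset V) :=
    insert ({t, u, v} : Finset V) (insert ({t1, t2, w} : Finset V)
      (𝒯.erase ({t, t1, t2} : Finset V))) with h𝒮
  have hne2 : ({t1, t2, w} : Finset V) ∉ 𝒯.erase ({t, t1, t2} : Finset V) := by
    intro h
    exact hw (hWsub _ (Finset.mem_of_mem_erase h) w (by simp))
  have hne1 : ({t, u, v} : Finset V) ∉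
      insert ({t1, t2, w} : Finset V) (𝒯.erase ({t, t1, t2} : Finset V)) := by
    intro h
    rcases Finset.mem_insert.mp h with h | h
    · have hum : u ∈ ({t1, t2, w} : Finset V) := h ▸ (by simp : u ∈ ({t, u, v} : Finset V))
      simp only [Finset.mem_insert, Finset.mem_singleton] at hum
      rcases hum with rfl | rfl | rfl
      · exact hu ht1W
      · exact hu ht2W
      · exact hwu rfl
    · exact hu (hWsub _ (Finset.mem_of_mem_erase h) u (by simp))
  have hpack' : IsTrianglePacking G 𝒮 := by
    constructor
    · intro S hS
      rcases Finset.mem_insert.mp hS with rfl | hS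
      · exact hS1
      rcases Finset.mem_insert.mp hS with rfl | hS
      · exact hS2
      · exact hpack.1.1 _ (Finset.mem_of_mem_erase hS)
    · intro S hSm S' hS'm hne
      rw [Finset.mem_coe, h𝒮, Finset.mem_insert, Finset.mem_insert] at hSm hS'm
      rcases hSm with rfl | rfl | h <;> rcases hS'm with rfl | rfl | h'
      · exact absurd rfl hne
      · exact hd12
      · exact hd1 _ h'
      · exact hd12.symm
      · exact absurd rfl hne
      · exact hd2 _ h'
      · exact (hd1 _ h).symm
      · exact (hd2 _ h).symm
      · exact hpack.1.2 (Finset.mem_of_mem_erase h) (Finset.mem_of_mem_erase h') hne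
  have hcard : 𝒮.card = 𝒯.card + 1 := by
    rw [h𝒮, Finset.card_insert_of_notMem hne1, Finset.card_insert_of_notMem hne2,
      Finset.card_erase_of_mem hT]
    have : 1 ≤ 𝒯.card := Finset.card_pos.mpr ⟨_, hT⟩
    omega
  have := hpack.2 𝒮 hpack'
  omega
theorem stmt8 {V : Type*} [Fintype V] [DecidableEq V] (G : SimpleGraph V) (hK4 : G.CliqueFree 4)
    (𝒯 : Finset (Finset V)) (hpack : IsMaxTrianglePacking G 𝒯)
    (x y z : V) (hT : ({x, y, z} : Finset V) ∈ 𝒯)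
    -- A, B, C : common neighborhoods in G' of the three edges of T
    (A B C : Set V)
    (hA : A = {v | v ∉ 𝒯.sup id ∧ G.Adj x v ∧ G.Adj y v})
    (hB : B = {v | v ∉ 𝒯.sup id ∧ G.Adj y v ∧ G.Adj z v})
    (hC : C = {v | v ∉ 𝒯.sup id ∧ G.Adj x v ∧ G.Adj z v})
    (hAne : A.Nonempty) (hBne : B.Nonempty) (hCne : C.Nonempty)
    -- s : the number of edges of G between {x, y, z} and V(G')
    (s : ℕ)
    (hs : s = {p : V × V | p.1 ∈ ({x, y, z} : Set V) ∧ p.2 ∉ 𝒯.sup id ∧ G.Adj p.1 p.2}.ncard) :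
    (s : ℝ) ^ 2 / 6 - (s : ℝ) / 2 ≤
      -- number of K₄-saturating edges with both endpoints in V(G')
      ({e : Sym2 V | ∃ u v, e = s(u, v) ∧ SatEdge G u v ∧
          u ∉ 𝒯.sup id ∧ v ∉ 𝒯.sup id}.ncard : ℝ) +
      -- number of pairs of distinct nonadjacent vertices of G'
      ({e : Sym2 V | ∃ u v, e = s(u, v) ∧ u ≠ v ∧ ¬ G.Adj u v ∧
          u ∉ 𝒯.sup id ∧ v ∉ 𝒯.sup id}.ncard : ℝ) := by
  classical
  set W := 𝒯.sup id with hW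
  have hT3 : G.IsNClique 3 ({x, y, z} : Finset V) := hpack.1.1 _ hT
  have h3 : ({x, y, z} : Finset V).card = 3 := hT3.2
  have hcard2 : ∀ a b : V, ({a, b} : Finset V).card ≤ 2 :=
    fun a b => (Finset.card_insert_le _ _).trans (by simp)
  have hxyne : x ≠ y := by
    rintro rfl
    have hsub : ({x, x, z} : Finset V) ⊆ {x, z} := by intro a ha; simpa using ha
    have := (Finset.card_le_card hsub).trans (hcard2 x z)
    omega
  have hyzne : y ≠ z := by
    rintro rfl
    have hsub : ({x, y, y} : Finset V) ⊆ {x, y} := by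
      intro a ha; simp at ha ⊢; tauto
    have := (Finset.card_le_card hsub).trans (hcard2 x y)
    omega
  have hxzne : x ≠ z := by
    rintro rfl
    have hsub : ({x, y, x} : Finset V) ⊆ {x, y} := by
      intro a ha; simp at ha ⊢; tauto
    have := (Finset.card_le_card hsub).trans (hcard2 x y)
    omega
  have hxy : G.Adj x y := hT3.1 (by simp) (by simp) hxyne
  have hyz : G.Adj y z := hT3.1 (by simp) (by simp) hyzne
  have hxz : G.Adj x z := hT3.1 (by simp) (by simp) hxzne
  -- the nonempty witness vertices
  obtain ⟨a0, ha0⟩ := hAne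
  obtain ⟨b0, hb0⟩ := hBne
  obtain ⟨c0, hc0⟩ := hCne
  rw [hA] at ha0; rw [hB] at hb0; rw [hC] at hc0
  obtain ⟨ha0W, ha0x, ha0y⟩ := ha0
  obtain ⟨hb0W, hb0y, hb0z⟩ := hb0
  obtain ⟨hc0W, hc0x, hc0z⟩ := hc0
  -- membership variants of the triangle
  have hTy : ({y, x, z} : Finset V) ∈ 𝒯 := by
    have : ({y, x, z} : Finset V) = {x, y, z} := by ext a; simp; tauto
    rwa [this]
  have hTz : ({z, x, y} : Finset V) ∈ 𝒯 := by
    have : ({z, x, y} : Finset V) = {x, y, z} := by ext a; simp; tauto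
    rwa [this]
  -- independence of the three neighbourhoods
  have hindx : ∀ u v : V, u ∉ W → v ∉ W → G.Adj x u → G.Adj x v → ¬ G.Adj u v :=
    fun u v hu hv hxu hxv huv =>
      swap_false hK4 hpack hT hxy hxz hyz hu hv hb0W hxu hxv huv hb0y hb0z
  have hindy : ∀ u v : V, u ∉ W → v ∉ W → G.Adj y u → G.Adj y v → ¬ G.Adj u v :=
    fun u v hu hv hyu hyv huv =>
      swap_false hK4 hpack hTy hxy.symm hyz hxz hu hv hc0W hyu hyv huv hc0x hc0z
  have hindz : ∀ u v : V, u ∉ W → v ∉ W → G.Adj z u → G.Adj z v → ¬ G.Adj u v :=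
    fun u v hu hv hzu hzv huv =>
      swap_false hK4 hpack hTz hxz.symm hyz.symm hxy hu hv ha0W hzu hzv huv ha0x ha0y
  -- the three neighbourhoods
  set Sx : Finset V := Finset.univ.filter (fun v => v ∉ W ∧ G.Adj x v) with hSx
  set Sy : Finset V := Finset.univ.filter (fun v => v ∉ W ∧ G.Adj y v) with hSy
  set Sz : Finset V := Finset.univ.filter (fun v => v ∉ W ∧ G.Adj z v) with hSz
  have hmemSx : ∀ v : V, v ∈ Sx ↔ v ∉ W ∧ G.Adj x v := by intro v; simp [hSx]
  have hmemSy : ∀ v : V, v ∈ Sy ↔ v ∉ W ∧ G.Adj y v := by intro v; simp [hSy]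
  have hmemSz : ∀ v : V, v ∈ Sz ↔ v ∉ W ∧ G.Adj z v := by intro v; simp [hSz]
  -- value of s
  have hsval : s = Sx.card + Sy.card + Sz.card := by
    have hset : {p : V × V | p.1 ∈ ({x, y, z} : Set V) ∧ p.2 ∉ W ∧ G.Adj p.1 p.2}
        = ↑((({x} : Finset V) ×ˢ Sx) ∪ (({y} : Finset V) ×ˢ Sy) ∪ (({z} : Finset V) ×ˢ Sz)) := by
      ext ⟨p1, p2⟩
      simp only [Set.mem_setOf_eq, Set.mem_insert_iff, Set.mem_singleton_iff, Finset.coe_union,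
        Set.mem_union, Finset.mem_coe, Finset.mem_product, Finset.mem_singleton,
        hmemSx, hmemSy, hmemSz]
      constructor
      · rintro ⟨(rfl | rfl | rfl), h2, h3⟩
        · exact Or.inl (Or.inl ⟨rfl, h2, h3⟩)
        · exact Or.inl (Or.inr ⟨rfl, h2, h3⟩)
        · exact Or.inr ⟨rfl, h2, h3⟩
      · rintro ((⟨rfl, h2, h3⟩ | ⟨rfl, h2, h3⟩) | ⟨rfl, h2, h3⟩)
        · exact ⟨Or.inl rfl, h2, h3⟩
        · exact ⟨Or.inr (Or.inl rfl), h2, h3⟩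
        · exact ⟨Or.inr (Or.inr rfl), h2, h3⟩
    have hd1 : Disjoint ((({x} : Finset V) ×ˢ Sx)) ((({y} : Finset V) ×ˢ Sy)) := by
      rw [Finset.disjoint_left]
      rintro ⟨p1, p2⟩ h1 h2
      simp only [Finset.mem_product, Finset.mem_singleton] at h1 h2
      exact hxyne (h1.1 ▸ h2.1 ▸ rfl)
    have hd2 : Disjoint ((({x} : Finset V) ×ˢ Sx) ∪ (({y} : Finset V) ×ˢ Sy))
        ((({z} : Finset V) ×ˢ Sz)) := by
      rw [Finset.disjoint_left]
      rintro ⟨p1, p2⟩ h1 h2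
      simp only [Finset.mem_union, Finset.mem_product, Finset.mem_singleton] at h1 h2
      rcases h1 with h1 | h1
      · exact hxzne (h1.1 ▸ h2.1 ▸ rfl)
      · exact hyzne (h1.1 ▸ h2.1 ▸ rfl)
    rw [hs, hset, Set.ncard_coe_finset, Finset.card_union_of_disjoint hd2,
      Finset.card_union_of_disjoint hd1]
    simp [Finset.card_product]
  -- pair sets
  set Px : Finset (Sym2 V) := Sx.offDiag.image Sym2.mk.uncurry with hPx
  set Py : Finset (Sym2 V) := Sy.offDiag.image Sym2.mk.uncurry with hPy
  set Pz : Finset (Sym2 V) := Sz.offDiag.image Sym2.mk.uncurry with hPz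
  have memP : ∀ (S : Finset V) (e : Sym2 V), e ∈ S.offDiag.image Sym2.mk.uncurry ↔
      ∃ u v, u ∈ S ∧ v ∈ S ∧ u ≠ v ∧ e = s(u, v) := by
    intro S e
    rw [Finset.mem_image]
    constructor
    · rintro ⟨⟨u, v⟩, hm, rfl⟩
      rw [Finset.mem_offDiag] at hm
      exact ⟨u, v, hm.1, hm.2.1, hm.2.2, rfl⟩
    · rintro ⟨u, v, hu, hv, hne, rfl⟩
      exact ⟨⟨u, v⟩, Finset.mem_offDiag.mpr ⟨hu, hv, hne⟩, rfl⟩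
  have memP1 : ∀ (S : Finset V) (u v : V), u ≠ v → s(u, v) ∈ S.offDiag.image Sym2.mk.uncurry →
      u ∈ S ∧ v ∈ S := by
    intro S u v hne he
    obtain ⟨u', v', hu', hv', hne', heq⟩ := (memP S _).mp he
    rcases Sym2.eq_iff.mp heq with ⟨rfl, rfl⟩ | ⟨rfl, rfl⟩
    · exact ⟨hu', hv'⟩
    · exact ⟨hv', hu'⟩
  -- target finsets
  set SF : Finset (Sym2 V) := Finset.univ.filter
    (fun e => ∃ u v, e = s(u, v) ∧ SatEdge G u v ∧ u ∉ W ∧ v ∉ W) with hSF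
  set NF : Finset (Sym2 V) := Finset.univ.filter
    (fun e => ∃ u v, e = s(u, v) ∧ u ≠ v ∧ ¬ G.Adj u v ∧ u ∉ W ∧ v ∉ W) with hNF
  have hSFcard : {e : Sym2 V | ∃ u v, e = s(u, v) ∧ SatEdge G u v ∧
      u ∉ W ∧ v ∉ W}.ncard = SF.card := by
    rw [← Set.ncard_coe_finset]
    congr 1
    ext e
    simp [hSF]
  have hNFcard : {e : Sym2 V | ∃ u v, e = s(u, v) ∧ u ≠ v ∧ ¬ G.Adj u v ∧
      u ∉ W ∧ v ∉ W}.ncard = NF.card := by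
    rw [← Set.ncard_coe_finset]
    congr 1
    ext e
    simp [hNF]
  -- union is nonadjacent pairs
  have hUsub : Px ∪ Py ∪ Pz ⊆ NF := by
    intro e he
    rw [hNF, Finset.mem_filter]
    refine ⟨Finset.mem_univ _, ?_⟩
    rcases Finset.mem_union.mp he with he | he
    · rcases Finset.mem_union.mp he with he | he
      · obtain ⟨u, v, hu, hv, hne, rfl⟩ := (memP _ _).mp he
        rw [hmemSx] at hu hv
        exact ⟨u, v, rfl, hne, hindx u v hu.1 hv.1 hu.2 hv.2, hu.1, hv.1⟩
      · obtain ⟨u, v, hu, hv, hne, rfl⟩ := (memP _ _).mp he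
        rw [hmemSy] at hu hv
        exact ⟨u, v, rfl, hne, hindy u v hu.1 hv.1 hu.2 hv.2, hu.1, hv.1⟩
    · obtain ⟨u, v, hu, hv, hne, rfl⟩ := (memP _ _).mp he
      rw [hmemSz] at hu hv
      exact ⟨u, v, rfl, hne, hindz u v hu.1 hv.1 hu.2 hv.2, hu.1, hv.1⟩
  -- intersections are saturating edges
  have hsat : ∀ (t t' u v : V), G.Adj t t' → u ∉ W → v ∉ W → u ≠ v → ¬ G.Adj u v →
      G.Adj t u → G.Adj t v → G.Adj t' u → G.Adj t' v → SatEdge G u v := by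
    intro t t' u v htt' hu hv hne hnadj htu htv ht'u ht'v
    refine ⟨hne, hnadj, ?_⟩
    intro hcf
    have hadj : ∀ a b : V, G.Adj a b → (G ⊔ SimpleGraph.fromEdgeSet {s(u, v)}).Adj a b :=
      fun a b h => (SimpleGraph.sup_adj _ _ _ _).mpr (Or.inl h)
    have huv' : (G ⊔ SimpleGraph.fromEdgeSet {s(u, v)}).Adj u v :=
      (SimpleGraph.sup_adj _ _ _ _).mpr (Or.inr (by
        rw [SimpleGraph.fromEdgeSet_adj]; exact ⟨rfl, hne⟩))
    exact clique4_false hcf (hadj _ _ htt') (hadj _ _ htu) (hadj _ _ htv)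
      (hadj _ _ ht'u) (hadj _ _ ht'v) huv'
  have hIxy : Px ∩ Py ⊆ SF := by
    intro e he
    rw [Finset.mem_inter] at he
    obtain ⟨u, v, hu, hv, hne, rfl⟩ := (memP _ _).mp he.1
    obtain ⟨huy, hvy⟩ := memP1 _ u v hne he.2
    rw [hmemSx] at hu hv; rw [hmemSy] at huy hvy
    rw [hSF, Finset.mem_filter]
    exact ⟨Finset.mem_univ _, u, v, rfl,
      hsat x y u v hxy hu.1 hv.1 hne (hindx u v hu.1 hv.1 hu.2 hv.2) hu.2 hv.2 huy.2 hvy.2,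
      hu.1, hv.1⟩
  have hIyz : Py ∩ Pz ⊆ SF := by
    intro e he
    rw [Finset.mem_inter] at he
    obtain ⟨u, v, hu, hv, hne, rfl⟩ := (memP _ _).mp he.1
    obtain ⟨huz, hvz⟩ := memP1 _ u v hne he.2
    rw [hmemSy] at hu hv; rw [hmemSz] at huz hvz
    rw [hSF, Finset.mem_filter]
    exact ⟨Finset.mem_univ _, u, v, rfl,
      hsat y z u v hyz hu.1 hv.1 hne (hindy u v hu.1 hv.1 hu.2 hv.2) hu.2 hv.2 huz.2 hvz.2,
      hu.1, hv.1⟩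
  have hIxz : Px ∩ Pz ⊆ SF := by
    intro e he
    rw [Finset.mem_inter] at he
    obtain ⟨u, v, hu, hv, hne, rfl⟩ := (memP _ _).mp he.1
    obtain ⟨huz, hvz⟩ := memP1 _ u v hne he.2
    rw [hmemSx] at hu hv; rw [hmemSz] at huz hvz
    rw [hSF, Finset.mem_filter]
    exact ⟨Finset.mem_univ _, u, v, rfl,
      hsat x z u v hxz hu.1 hv.1 hne (hindx u v hu.1 hv.1 hu.2 hv.2) hu.2 hv.2 huz.2 hvz.2,
      hu.1, hv.1⟩
  -- the three intersections are pairwise disjoint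
  have hno3 : ∀ u : V, u ∈ Sx → u ∈ Sy → u ∈ Sz → False := by
    intro u hux huy huz
    rw [hmemSx] at hux; rw [hmemSy] at huy; rw [hmemSz] at huz
    exact clique4_false hK4 hxy hxz hux.2 hyz huy.2 huz.2
  have hdisj1 : Disjoint (Px ∩ Py) (Py ∩ Pz) := by
    rw [Finset.disjoint_left]
    intro e he1 he2
    rw [Finset.mem_inter] at he1 he2
    obtain ⟨u, v, hu, hv, hne, rfl⟩ := (memP _ _).mp he1.1
    obtain ⟨huy, hvy⟩ := memP1 _ u v hne he1.2
    obtain ⟨huz, hvz⟩ := memP1 _ u v hne he2.2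
    exact hno3 u hu huy huz
  have hdisj2 : Disjoint (Px ∩ Py) (Px ∩ Pz) := by
    rw [Finset.disjoint_left]
    intro e he1 he2
    rw [Finset.mem_inter] at he1 he2
    obtain ⟨u, v, hu, hv, hne, rfl⟩ := (memP _ _).mp he1.1
    obtain ⟨huy, hvy⟩ := memP1 _ u v hne he1.2
    obtain ⟨huz, hvz⟩ := memP1 _ u v hne he2.2
    exact hno3 u hu huy huz
  have hdisj3 : Disjoint (Px ∩ Pz) (Py ∩ Pz) := by
    rw [Finset.disjoint_left]
    intro e he1 he2
    rw [Finset.mem_inter] at he1 he2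
    obtain ⟨u, v, hu, hv, hne, rfl⟩ := (memP _ _).mp he1.1
    obtain ⟨huz, hvz⟩ := memP1 _ u v hne he1.2
    obtain ⟨huy, hvy⟩ := memP1 _ u v hne he2.1
    exact hno3 u hu huy huz
  have hsumI : (Px ∩ Py).card + (Px ∩ Pz).card + (Py ∩ Pz).card ≤ SF.card := by
    have hd : Disjoint ((Px ∩ Py) ∪ (Px ∩ Pz)) (Py ∩ Pz) :=
      Finset.disjoint_union_left.mpr ⟨hdisj1, hdisj3⟩
    calc (Px ∩ Py).card + (Px ∩ Pz).card + (Py ∩ Pz).card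
        = (((Px ∩ Py) ∪ (Px ∩ Pz)) ∪ (Py ∩ Pz)).card := by
          rw [Finset.card_union_of_disjoint hd, Finset.card_union_of_disjoint hdisj2]
      _ ≤ SF.card := Finset.card_le_card (by
          apply Finset.union_subset (Finset.union_subset hIxy hIxz) hIyz)
  -- inclusion-exclusion
  have hmain : Px.card + Py.card + Pz.card ≤ NF.card + SF.card := by
    have e1 := Finset.card_union_add_card_inter Px Py
    have e2 := Finset.card_union_add_card_inter (Px ∪ Py) Pz
    have e3 : ((Px ∪ Py) ∩ Pz).card ≤ (Px ∩ Pz).card + (Py ∩ Pz).card := by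
      rw [Finset.union_inter_distrib_right]
      exact Finset.card_union_le _ _
    have e4 : (Px ∪ Py ∪ Pz).card ≤ NF.card := Finset.card_le_card hUsub
    omega
  -- cardinalities of the pair sets
  have hcx : Px.card = Sx.card.choose 2 := Sym2.card_image_offDiag _
  have hcy : Py.card = Sy.card.choose 2 := Sym2.card_image_offDiag _
  have hcz : Pz.card = Sz.card.choose 2 := Sym2.card_image_offDiag _
  -- final computation
  rw [hSFcard, hNFcard]
  have key : (s : ℝ) ^ 2 / 6 - (s : ℝ) / 2 ≤ (Px.card : ℝ) + Py.card + Pz.card := by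
    have c1 : (Px.card : ℝ) = (Sx.card : ℝ) * ((Sx.card : ℝ) - 1) / 2 := by
      rw [hcx, Nat.cast_choose_two]
    have c2 : (Py.card : ℝ) = (Sy.card : ℝ) * ((Sy.card : ℝ) - 1) / 2 := by
      rw [hcy, Nat.cast_choose_two]
    have c3 : (Pz.card : ℝ) = (Sz.card : ℝ) * ((Sz.card : ℝ) - 1) / 2 := by
      rw [hcz, Nat.cast_choose_two]
    have hsR : (s : ℝ) = (Sx.card : ℝ) + (Sy.card : ℝ) + (Sz.card : ℝ) := by
      rw [hsval]; push_cast; ring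
    rw [c1, c2, c3, hsR]
    nlinarith [sq_nonneg ((Sx.card : ℝ) - (Sy.card : ℝ)),
      sq_nonneg ((Sy.card : ℝ) - (Sz.card : ℝ)),
      sq_nonneg ((Sx.card : ℝ) - (Sz.card : ℝ))]
  refine key.trans ?_
  have : (Px.card : ℝ) + Py.card + Pz.card ≤ (NF.card : ℝ) + SF.card := by
    exact_mod_cast hmain
  linarith
end

section
/- If G is a K4-free simple graph and T_1, …, T_m are pairwise vertex-disjoint triangles in G, then the number of edges of G with both endpoints in V(T_1) ∪ ⋯ ∪ V(T_m) is at most 3m². -/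
open SimpleGraph

theorem stmt10 {V : Type*} [Fintype V] (G : SimpleGraph V) (hK4 : G.CliqueFree 4)
    (m : ℕ) (T : Fin m → Finset V) (hT : ∀ i, G.IsNClique 3 (T i))
    (hdisj : ∀ i j, i ≠ j → Disjoint (T i) (T j)) :
    {e ∈ G.edgeSet | ∀ v ∈ e, v ∈ ⋃ i, ((T i : Finset V) : Set V)}.ncard ≤ 3 * m ^ 2 := by
  classical
  set U : Finset V := Finset.univ.biUnion T with hU
  have hUmem : ∀ v : V, (v ∈ ⋃ i, ((T i : Finset V) : Set V)) ↔ v ∈ U := by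
    intro v
    simp [hU, Set.mem_iUnion]
  -- per-triangle neighbor bound
  have htri : ∀ (v : V) (i : Fin m), ((T i).filter (G.Adj v)).card ≤ 2 := by
    intro v i
    by_contra h
    push_neg at h
    have hsub : (T i).filter (G.Adj v) ⊆ T i := Finset.filter_subset _ _
    have hcard3 : (T i).card = 3 := (hT i).2
    have hle : (T i).card ≤ ((T i).filter (G.Adj v)).card := by omega
    have heq : (T i).filter (G.Adj v) = T i := Finset.eq_of_subset_of_card_le hsub hle
    have hadj : ∀ u ∈ T i, G.Adj v u := by
      intro u hu
      have : u ∈ (T i).filter (G.Adj v) := by rw [heq]; exact hu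
      exact (Finset.mem_filter.mp this).2
    have hvnot : v ∉ T i := fun hv => G.loopless.irrefl v (hadj v hv)
    have : G.IsNClique 4 (insert v (T i)) := (hT i).insert (fun b hb => hadj b hb)
    exact hK4 _ this
  let G' : SimpleGraph V :=
    { Adj := fun a b => G.Adj a b ∧ a ∈ U ∧ b ∈ U
      symm := ⟨by rintro a b ⟨h, ha, hb⟩; exact ⟨h.symm, hb, ha⟩⟩
      loopless := ⟨by rintro a ⟨h, _⟩; exact G.loopless.irrefl a h⟩ }
  have hG'adj : ∀ a b, G'.Adj a b ↔ G.Adj a b ∧ a ∈ U ∧ b ∈ U := fun a b => Iff.rfl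
  have hset : {e ∈ G.edgeSet | ∀ v ∈ e, v ∈ ⋃ i, ((T i : Finset V) : Set V)} = G'.edgeSet := by
    ext e
    induction e with
    | h a b =>
      simp only [Set.mem_setOf_eq, mem_edgeSet, hUmem, Sym2.mem_iff, hG'adj]
      constructor
      · rintro ⟨hadj, h⟩
        exact ⟨hadj, h a (Or.inl rfl), h b (Or.inr rfl)⟩
      · rintro ⟨hadj, ha, hb⟩
        refine ⟨hadj, ?_⟩
        rintro v (rfl | rfl) <;> assumption
  rw [hset]
  have hcardeq : G'.edgeSet.ncard = G'.edgeFinset.card := by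
    rw [← SimpleGraph.coe_edgeFinset, Set.ncard_coe_finset]
  rw [hcardeq]
  -- degree bound
  have hdeg : ∀ v : V, v ∈ U → G'.degree v ≤ 2 * m := by
    intro v hv
    have hsub : G'.neighborFinset v ⊆ Finset.univ.biUnion (fun i => (T i).filter (G.Adj v)) := by
      intro u hu
      rw [SimpleGraph.mem_neighborFinset] at hu
      obtain ⟨hadj, _, huU⟩ := hu
      rw [hU, Finset.mem_biUnion] at huU
      obtain ⟨i, _, hi⟩ := huU
      exact Finset.mem_biUnion.mpr ⟨i, Finset.mem_univ i, Finset.mem_filter.mpr ⟨hi, hadj⟩⟩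
    calc G'.degree v = (G'.neighborFinset v).card := rfl
      _ ≤ (Finset.univ.biUnion (fun i => (T i).filter (G.Adj v))).card := Finset.card_le_card hsub
      _ ≤ ∑ i : Fin m, ((T i).filter (G.Adj v)).card := Finset.card_biUnion_le
      _ ≤ ∑ _i : Fin m, 2 := Finset.sum_le_sum (fun i _ => htri v i)
      _ = 2 * m := by simp [Finset.sum_const, Nat.mul_comm]
  have hdeg0 : ∀ v : V, v ∉ U → G'.degree v = 0 := by
    intro v hv
    rw [SimpleGraph.degree, Finset.card_eq_zero]
    ext u
    simp only [SimpleGraph.mem_neighborFinset, Finset.notMem_empty, iff_false]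
    rintro ⟨_, hvU, _⟩
    exact hv hvU
  have hUcard : U.card ≤ 3 * m := by
    calc U.card ≤ ∑ i : Fin m, (T i).card := Finset.card_biUnion_le
      _ = ∑ _i : Fin m, 3 := Finset.sum_congr rfl (fun i _ => (hT i).2)
      _ = 3 * m := by simp [Finset.sum_const, Nat.mul_comm]
  have hsum : ∑ v : V, G'.degree v ≤ 6 * m ^ 2 := by
    have : ∑ v : V, G'.degree v = ∑ v ∈ U, G'.degree v := by
      rw [← Finset.sum_subset (Finset.subset_univ U)]
      intro v _ hv
      exact hdeg0 v hv
    rw [this]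
    calc ∑ v ∈ U, G'.degree v ≤ ∑ _v ∈ U, 2 * m := Finset.sum_le_sum (fun v hv => hdeg v hv)
      _ = U.card * (2 * m) := Finset.sum_const _
      _ ≤ (3 * m) * (2 * m) := Nat.mul_le_mul_right _ hUcard
      _ = 6 * m ^ 2 := by ring
  have h2 : 2 * G'.edgeFinset.card = ∑ v : V, G'.degree v :=
    (SimpleGraph.sum_degrees_eq_twice_card_edges G').symm
  omega
end

section
/- Let G be a K4-free simple graph, let 𝒯 be a maximum triangle packing of G, and let T = {x, y, z} ∈ 𝒯. If some vertex of G' is adjacent in G to both y and z, then the set of vertices of G' that are adjacent to x is an independent set in G. -/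
open SimpleGraph

theorem stmt16 {V : Type*} [Fintype V] [DecidableEq V] (G : SimpleGraph V)
    (hK4 : G.CliqueFree 4)
    (𝒯 : Finset (Finset V)) (hpack : IsMaxTrianglePacking G 𝒯)
    (x y z : V) (hT : ({x, y, z} : Finset V) ∈ 𝒯)
    -- some vertex of G' is adjacent to both y and z
    (hB : ∃ v, v ∉ 𝒯.sup id ∧ G.Adj y v ∧ G.Adj z v) :
    -- the set of vertices of G' adjacent to x is independent
    ∀ u v : V, u ∉ 𝒯.sup id → v ∉ 𝒯.sup id → G.Adj x u → G.Adj x v → ¬ G.Adj u v := by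
  rintro u v hu hv hxu hxv huv
  obtain ⟨⟨hcl, hdisj⟩, hmax⟩ := hpack
  obtain ⟨w, hw, hyw, hzw⟩ := hB
  have hTsub : ({x, y, z} : Finset V) ⊆ 𝒯.sup id := Finset.le_sup (f := id) hT
  have hx : x ∈ 𝒯.sup id := hTsub (by simp)
  have hy : y ∈ 𝒯.sup id := hTsub (by simp)
  have hz : z ∈ 𝒯.sup id := hTsub (by simp)
  have hmemS : ∀ S ∈ 𝒯, ∀ a ∈ S, a ∈ 𝒯.sup id := fun S hS a ha =>
    Finset.le_sup (f := id) hS ha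
  have hTcl := hcl _ hT
  rw [is3Clique_triple_iff] at hTcl
  obtain ⟨hxy, hxz, hyz⟩ := hTcl
  have hwu : w ≠ u := by
    rintro rfl
    exact hK4 _ ((is3Clique_triple_iff.2 ⟨hyz, hyw, hzw⟩).insert
      (by rintro b hb; simp only [Finset.mem_insert, Finset.mem_singleton] at hb
          rcases hb with rfl | rfl | rfl <;> [exact hxy; exact hxz; exact hxu]))
  have hwv : w ≠ v := by
    rintro rfl
    exact hK4 _ ((is3Clique_triple_iff.2 ⟨hyz, hyw, hzw⟩).insert
      (by rintro b hb; simp only [Finset.mem_insert, Finset.mem_singleton] at hb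
          rcases hb with rfl | rfl | rfl <;> [exact hxy; exact hxz; exact hxv]))
  set T0 : Finset V := {x, y, z} with hT0
  set A : Finset V := {x, u, v} with hA
  set B : Finset V := {w, y, z} with hB'
  have hAcl : G.IsNClique 3 A := is3Clique_triple_iff.2 ⟨hxu, hxv, huv⟩
  have hBcl : G.IsNClique 3 B := is3Clique_triple_iff.2 ⟨hyw.symm, hzw.symm, hyz⟩
  -- membership facts
  have hAnot : A ∉ 𝒯 := fun h => hu (hmemS _ h u (by simp [hA]))
  have hBnot : B ∉ 𝒯 := fun h => hw (hmemS _ h w (by simp [hB']))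
  have hAB : A ≠ B := by
    intro h
    have : u ∈ B := h ▸ (by simp [hA] : u ∈ A)
    simp only [hB', Finset.mem_insert, Finset.mem_singleton] at this
    rcases this with rfl | rfl | rfl
    · exact hwu rfl
    · exact hu hy
    · exact hu hz
  have hABdisj : Disjoint A B := by
    rw [Finset.disjoint_left]
    intro a ha hb
    simp only [hA, hB', Finset.mem_insert, Finset.mem_singleton] at ha hb
    rcases ha with rfl | rfl | rfl
    · rcases hb with rfl | rfl | rfl
      · exact hw hx
      · exact hxy.ne rfl
      · exact hxz.ne rfl
    · rcases hb with rfl | rfl | rfl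
      · exact hwu rfl
      · exact hu hy
      · exact hu hz
    · rcases hb with rfl | rfl | rfl
      · exact hwv rfl
      · exact hv hy
      · exact hv hz
  have hAS : ∀ S ∈ 𝒯, S ≠ T0 → Disjoint A S := by
    intro S hS hne
    rw [Finset.disjoint_left]
    intro a ha haS
    simp only [hA, Finset.mem_insert, Finset.mem_singleton] at ha
    rcases ha with rfl | rfl | rfl
    · exact Finset.disjoint_left.1 (hdisj (by exact hT) hS (Ne.symm hne)) (by simp [hT0]) haS
    · exact hu (hmemS _ hS _ haS)
    · exact hv (hmemS _ hS _ haS)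
  have hBS : ∀ S ∈ 𝒯, S ≠ T0 → Disjoint B S := by
    intro S hS hne
    rw [Finset.disjoint_left]
    intro a ha haS
    simp only [hB', Finset.mem_insert, Finset.mem_singleton] at ha
    rcases ha with rfl | rfl | rfl
    · exact hw (hmemS _ hS _ haS)
    · exact Finset.disjoint_left.1 (hdisj (by exact hT) hS (Ne.symm hne)) (by simp [hT0]) haS
    · exact Finset.disjoint_left.1 (hdisj (by exact hT) hS (Ne.symm hne)) (by simp [hT0]) haS
  set 𝒮 : Finset (Finset V) := insert A (insert B (𝒯.erase T0)) with h𝒮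
  have hSpack : IsTrianglePacking G 𝒮 := by
    constructor
    · intro S hS
      simp only [h𝒮, Finset.mem_insert, Finset.mem_erase] at hS
      rcases hS with rfl | rfl | ⟨-, hS⟩
      · exact hAcl
      · exact hBcl
      · exact hcl _ hS
    · intro P hP Q hQ hne
      simp only [h𝒮, Finset.coe_insert, Set.mem_insert_iff, Finset.coe_erase,
        Set.mem_diff, Finset.mem_coe, Set.mem_singleton_iff] at hP hQ
      rcases hP with rfl | rfl | ⟨hP, hPne⟩ <;>
        rcases hQ with rfl | rfl | ⟨hQ, hQne⟩
      · exact absurd rfl hne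
      · exact hABdisj
      · exact hAS _ hQ hQne
      · exact hABdisj.symm
      · exact absurd rfl hne
      · exact hBS _ hQ hQne
      · exact (hAS _ hP hPne).symm
      · exact (hBS _ hP hPne).symm
      · exact hdisj hP hQ hne
  have hcard : 𝒮.card = 𝒯.card + 1 := by
    have h1 : B ∉ 𝒯.erase T0 := fun h => hBnot (Finset.mem_of_mem_erase h)
    have h2 : A ∉ insert B (𝒯.erase T0) := by
      simp only [Finset.mem_insert]
      rintro (h | h)
      · exact hAB h
      · exact hAnot (Finset.mem_of_mem_erase h)
    have hpos : 1 ≤ 𝒯.card := Finset.card_pos.2 ⟨T0, hT⟩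
    rw [h𝒮, Finset.card_insert_of_notMem h2, Finset.card_insert_of_notMem h1,
      Finset.card_erase_of_mem hT]
    omega
  have := hmax 𝒮 hSpack
  omega
end
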